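/- arXiv:2512.08684 — 3 statements merged into one kernel-verified Lean document; each statement's English description precedes it below -/
import Mathlib

section
/- For every integer n ≥ 1, every real x > 0, all reals ε, ε_s with 0 < ε ≤ ε_s, and every real λ with −1 ≤ λ ≤ 1, the quadratic f_n satisfies f_n(λ) > 0. -/
open Real Finset

/-- Modified spherical Bessel function of the second kind `k_n`, explicit closed form. -/
noncomputable def kBes (n : ℕ) (x : ℝ) : ℝ :=
  (Real.exp (-x) / x) *
    ∑ l ∈ Finset.range (n + 1),
      (Nat.factorial (n + l) : ℝ) /
        ((Nat.factorial l : ℝ) * (Nat.factorial (n - l) : ℝ) * (2 * x) ^ l)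

/-- Modified spherical Bessel function of the first kind `i_n`, explicit closed form. -/
noncomputable def iBes (n : ℕ) (x : ℝ) : ℝ :=
  (1 / (2 * x)) *
    (Real.exp x *
        ∑ l ∈ Finset.range (n + 1),
          (-1 : ℝ) ^ l * (Nat.factorial (n + l) : ℝ) /
            ((Nat.factorial l : ℝ) * (Nat.factorial (n - l) : ℝ) * (2 * x) ^ l)
      + (-1 : ℝ) ^ (n + 1) * Real.exp (-x) *
        ∑ l ∈ Finset.range (n + 1),
          (Nat.factorial (n + l) : ℝ) /
            ((Nat.factorial l : ℝ) * (Nat.factorial (n - l) : ℝ) * (2 * x) ^ l))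

/-- generic signed sum -/
noncomputable def uB (e : ℝ) (n : ℕ) (x : ℝ) : ℝ :=
  ∑ l ∈ Finset.range (n + 1),
    e ^ l * (Nat.factorial (n + l) : ℝ) /
      ((Nat.factorial l : ℝ) * (Nat.factorial (n - l) : ℝ) * (2 * x) ^ l)

noncomputable def sB (n : ℕ) (x : ℝ) : ℝ := uB 1 n x
noncomputable def tB (n : ℕ) (x : ℝ) : ℝ := uB (-1) n x

lemma kBes_eq (n : ℕ) (x : ℝ) : kBes n x = (Real.exp (-x) / x) * sB n x := by
  unfold kBes sB uB
  congr 1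
  exact Finset.sum_congr rfl fun l _ => by rw [one_pow, one_mul]

lemma iBes_eq (n : ℕ) (x : ℝ) :
    iBes n x = (1 / (2 * x)) *
      (Real.exp x * tB n x + (-1 : ℝ) ^ (n + 1) * Real.exp (-x) * sB n x) := by
  unfold iBes tB sB uB
  have : ∀ s : Finset ℕ, (∑ l ∈ s, (Nat.factorial (n + l) : ℝ) /
        ((Nat.factorial l : ℝ) * (Nat.factorial (n - l) : ℝ) * (2 * x) ^ l))
      = ∑ l ∈ s, (1:ℝ) ^ l * (Nat.factorial (n + l) : ℝ) /
        ((Nat.factorial l : ℝ) * (Nat.factorial (n - l) : ℝ) * (2 * x) ^ l) := fun s =>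
    Finset.sum_congr rfl fun l _ => by rw [one_pow, one_mul]
  rw [this]

lemma fcast (a : ℕ) : ((Nat.factorial (a+1) : ℕ) : ℝ) = (a+1) * (Nat.factorial a : ℕ) := by
  rw [Nat.factorial_succ]; push_cast; try ring

lemma fpos (a : ℕ) : (0:ℝ) < (Nat.factorial a : ℕ) := by
  exact_mod_cast Nat.factorial_pos a

lemma key_id (x e : ℝ) (hx : x ≠ 0) (l m : ℕ) :
    e^(l+1) * (Nat.factorial (2*l+m+4) : ℝ) /
      ((Nat.factorial (l+1) : ℝ) * (Nat.factorial (m+2) : ℝ) * (2*x)^(l+1))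
    = e^(l+1) * (Nat.factorial (2*l+m+2) : ℝ) /
      ((Nat.factorial (l+1) : ℝ) * (Nat.factorial m : ℝ) * (2*x)^(l+1))
    + e * ((2*(l+1+m)+3)/x) * (e^l * (Nat.factorial (2*l+m+2) : ℝ) /
      ((Nat.factorial l : ℝ) * (Nat.factorial (m+2) : ℝ) * (2*x)^l)) := by
  have e1 : (Nat.factorial (2*l+m+4) : ℝ)
      = (2*l+m+4)*((2*l+m+3)*(Nat.factorial (2*l+m+2))) := by
    rw [show 2*l+m+4 = (2*l+m+3)+1 by ring, fcast, show 2*l+m+3 = (2*l+m+2)+1 by ring, fcast]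
    push_cast; try ring
  have e2 : (Nat.factorial (m+2) : ℝ) = (m+2)*((m+1)*(Nat.factorial m)) := by
    rw [show m+2 = (m+1)+1 by ring, fcast, fcast]; push_cast; try ring
  have e3 : (Nat.factorial (l+1) : ℝ) = (l+1)*(Nat.factorial l) := by
    rw [fcast]
  have h2x : (2*x)^l ≠ 0 := pow_ne_zero _ (by simpa using hx)
  rw [e1, e2, e3, pow_succ, pow_succ]
  field_simp
  ring

lemma key_bd1 (x e : ℝ) (hx : x ≠ 0) (n : ℕ) :
    e^(n+1) * (Nat.factorial (2*n+3) : ℝ) /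
      ((Nat.factorial (n+1) : ℝ) * (Nat.factorial 1 : ℝ) * (2*x)^(n+1))
    = e * ((2*n+3)/x) * (e^n * (Nat.factorial (2*n+1) : ℝ) /
      ((Nat.factorial n : ℝ) * (Nat.factorial 1 : ℝ) * (2*x)^n)) := by
  have e1 : (Nat.factorial (2*n+3) : ℝ)
      = (2*n+3)*((2*n+2)*(Nat.factorial (2*n+1))) := by
    rw [show 2*n+3 = (2*n+2)+1 by ring, fcast, show 2*n+2 = (2*n+1)+1 by ring, fcast]
    push_cast; try ring
  have e3 : (Nat.factorial (n+1) : ℝ) = (n+1)*(Nat.factorial n) := by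
    rw [fcast]
  have h2x : (2*x)^n ≠ 0 := pow_ne_zero _ (by simpa using hx)
  rw [e1, e3, pow_succ]
  field_simp
  ring

lemma key_bd2 (x e : ℝ) (hx : x ≠ 0) (n : ℕ) :
    e^(n+2) * (Nat.factorial (2*n+4) : ℝ) /
      ((Nat.factorial (n+2) : ℝ) * (Nat.factorial 0 : ℝ) * (2*x)^(n+2))
    = e * ((2*n+3)/x) * (e^(n+1) * (Nat.factorial (2*n+2) : ℝ) /
      ((Nat.factorial (n+1) : ℝ) * (Nat.factorial 0 : ℝ) * (2*x)^(n+1))) := by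
  have e1 : (Nat.factorial (2*n+4) : ℝ)
      = (2*n+4)*((2*n+3)*(Nat.factorial (2*n+2))) := by
    rw [show 2*n+4 = (2*n+3)+1 by ring, fcast, show 2*n+3 = (2*n+2)+1 by ring, fcast]
    push_cast; try ring
  have e3 : (Nat.factorial (n+2) : ℝ) = (n+2)*(Nat.factorial (n+1)) := by
    rw [show n+2 = (n+1)+1 by ring, fcast]; push_cast; try ring
  have h2x : (2*x)^(n+1) ≠ 0 := pow_ne_zero _ (by simpa using hx)
  rw [e1, e3, pow_succ]
  field_simp
  ring

/-- the main recurrence for the generic sum -/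
lemma uB_rec (e : ℝ) (n : ℕ) (x : ℝ) (hx : x ≠ 0) :
    uB e (n+2) x = uB e n x + e * ((2*n+3)/x) * uB e (n+1) x := by
  unfold uB
  rw [Finset.mul_sum]
  rw [Finset.sum_range_succ' (fun l => e ^ l * (Nat.factorial (n+2+l) : ℝ) /
      ((Nat.factorial l : ℝ) * (Nat.factorial (n+2-l) : ℝ) * (2 * x) ^ l)) (n+2)]
  rw [Finset.sum_range_succ' (fun l => e ^ l * (Nat.factorial (n+l) : ℝ) /
      ((Nat.factorial l : ℝ) * (Nat.factorial (n-l) : ℝ) * (2 * x) ^ l)) n]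
  -- split top two terms of the (n+2)-range sums
  rw [Finset.sum_range_succ (fun l => e ^ (l+1) * (Nat.factorial (n+2+(l+1)) : ℝ) /
      ((Nat.factorial (l+1) : ℝ) * (Nat.factorial (n+2-(l+1)) : ℝ) * (2 * x) ^ (l+1))) (n+1)]
  rw [Finset.sum_range_succ (fun l => e ^ (l+1) * (Nat.factorial (n+2+(l+1)) : ℝ) /
      ((Nat.factorial (l+1) : ℝ) * (Nat.factorial (n+2-(l+1)) : ℝ) * (2 * x) ^ (l+1))) n]
  rw [Finset.sum_range_succ (fun l => e * ((2*n+3)/x) * (e ^ l * (Nat.factorial (n+1+l) : ℝ) /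
      ((Nat.factorial l : ℝ) * (Nat.factorial (n+1-l) : ℝ) * (2 * x) ^ l))) (n+1)]
  rw [Finset.sum_range_succ (fun l => e * ((2*n+3)/x) * (e ^ l * (Nat.factorial (n+1+l) : ℝ) /
      ((Nat.factorial l : ℝ) * (Nat.factorial (n+1-l) : ℝ) * (2 * x) ^ l))) n]
  have hmain : ∀ l ∈ Finset.range n,
      e ^ (l+1) * (Nat.factorial (n+2+(l+1)) : ℝ) /
        ((Nat.factorial (l+1) : ℝ) * (Nat.factorial (n+2-(l+1)) : ℝ) * (2 * x) ^ (l+1))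
      = e ^ (l+1) * (Nat.factorial (n+(l+1)) : ℝ) /
        ((Nat.factorial (l+1) : ℝ) * (Nat.factorial (n-(l+1)) : ℝ) * (2 * x) ^ (l+1))
      + e * ((2*n+3)/x) * (e ^ l * (Nat.factorial (n+1+l) : ℝ) /
        ((Nat.factorial l : ℝ) * (Nat.factorial (n+1-l) : ℝ) * (2 * x) ^ l)) := by
    intro l hl
    rw [Finset.mem_range] at hl
    obtain ⟨m, rfl⟩ : ∃ m, n = l + 1 + m := ⟨n - (l+1), by omega⟩
    have r1 : l+1+m+2+(l+1) = 2*l+m+4 := by omega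
    have r2 : l+1+m+2-(l+1) = m+2 := by omega
    have r3 : l+1+m+(l+1) = 2*l+m+2 := by omega
    have r4 : l+1+m-(l+1) = m := by omega
    have r5 : l+1+m+1+l = 2*l+m+2 := by omega
    have r6 : l+1+m+1-l = m+2 := by omega
    rw [r1, r2, r3, r4, r5, r6]
    have := key_id x e hx l m
    convert this using 4 <;> push_cast <;> ring
  rw [Finset.sum_congr rfl hmain, Finset.sum_add_distrib]
  -- boundary terms
  have hb1 : e ^ (n+1) * (Nat.factorial (n+2+(n+1)) : ℝ) /
        ((Nat.factorial (n+1) : ℝ) * (Nat.factorial (n+2-(n+1)) : ℝ) * (2 * x) ^ (n+1))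
      = e * ((2*n+3)/x) * (e ^ n * (Nat.factorial (n+1+n) : ℝ) /
        ((Nat.factorial n : ℝ) * (Nat.factorial (n+1-n) : ℝ) * (2 * x) ^ n)) := by
    have r1 : n+2+(n+1) = 2*n+3 := by omega
    have r2 : n+2-(n+1) = 1 := by omega
    have r3 : n+1+n = 2*n+1 := by omega
    have r4 : n+1-n = 1 := by omega
    rw [r1, r2, r3, r4]
    exact key_bd1 x e hx n
  have hb2 : e ^ (n+1+1) * (Nat.factorial (n+2+(n+1+1)) : ℝ) /
        ((Nat.factorial (n+1+1) : ℝ) * (Nat.factorial (n+2-(n+1+1)) : ℝ) * (2 * x) ^ (n+1+1))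
      = e * ((2*n+3)/x) * (e ^ (n+1) * (Nat.factorial (n+1+(n+1)) : ℝ) /
        ((Nat.factorial (n+1) : ℝ) * (Nat.factorial (n+1-(n+1)) : ℝ) * (2 * x) ^ (n+1))) := by
    have r1 : n+2+(n+1+1) = 2*n+4 := by omega
    have r2 : n+2-(n+1+1) = 0 := by omega
    have r3 : n+1+(n+1) = 2*n+2 := by omega
    have r4 : n+1-(n+1) = 0 := by omega
    have r5 : n+1+1 = n+2 := by omega
    rw [r1, r2, r3, r4, r5]
    exact key_bd2 x e hx n
  rw [hb1, hb2]
  have hz : e ^ 0 * (Nat.factorial (n+2+0) : ℝ) /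
        ((Nat.factorial 0 : ℝ) * (Nat.factorial (n+2-0) : ℝ) * (2 * x) ^ 0)
      = e ^ 0 * (Nat.factorial (n+0) : ℝ) /
        ((Nat.factorial 0 : ℝ) * (Nat.factorial (n-0) : ℝ) * (2 * x) ^ 0) := by
    simp only [Nat.add_zero, Nat.sub_zero, pow_zero]
    rw [div_eq_div_iff] <;> [skip; positivity; positivity]
    push_cast; try ring
  rw [hz]
  ring


lemma sB_rec (n : ℕ) (x : ℝ) (hx : x ≠ 0) :
    sB (n+2) x = sB n x + ((2*n+3)/x) * sB (n+1) x := by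
  have h := uB_rec 1 n x hx
  simpa [sB, one_mul] using h

lemma tB_rec (n : ℕ) (x : ℝ) (hx : x ≠ 0) :
    tB (n+2) x = tB n x - ((2*n+3)/x) * tB (n+1) x := by
  have h := uB_rec (-1) n x hx
  unfold tB
  rw [h]; ring

lemma sB0 (x : ℝ) : sB 0 x = 1 := by
  simp [sB, uB, Nat.factorial]

lemma tB0 (x : ℝ) : tB 0 x = 1 := by
  simp [tB, uB, Nat.factorial]

lemma sB1 (x : ℝ) (hx : x ≠ 0) : sB 1 x = 1 + 1/x := by
  simp [sB, uB, Finset.sum_range_succ, Nat.factorial]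
  field_simp

lemma tB1 (x : ℝ) (hx : x ≠ 0) : tB 1 x = 1 - 1/x := by
  simp [tB, uB, Finset.sum_range_succ, Nat.factorial]
  field_simp; ring

lemma sB2 (x : ℝ) (hx : x ≠ 0) : sB 2 x = 1 + 3/x + 3/x^2 := by
  simp [sB, uB, Finset.sum_range_succ, Nat.factorial]
  field_simp; ring

lemma sB3 (x : ℝ) (hx : x ≠ 0) : sB 3 x = 1 + 6/x + 15/x^2 + 15/x^3 := by
  simp [sB, uB, Finset.sum_range_succ, Nat.factorial]
  field_simp; ring

/-- Wronskian-type pairing identity -/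
lemma pairing (x : ℝ) (hx : x ≠ 0) : ∀ n : ℕ,
    tB n x * sB (n+1) x + tB (n+1) x * sB n x = 2 := by
  intro n
  induction n with
  | zero => rw [sB0, tB0, sB1 x hx, tB1 x hx]; ring
  | succ m ih =>
      have h1 : sB (m+1+1) x = sB (m+2) x := rfl
      have h2 : tB (m+1+1) x = tB (m+2) x := rfl
      rw [h1, h2, sB_rec m x hx, tB_rec m x hx]
      nlinarith [ih]

lemma sB_pos (n : ℕ) (x : ℝ) (hx : 0 < x) : 0 < sB n x := by
  unfold sB uB
  apply Finset.sum_pos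
  · intro l _
    have h1 : (0:ℝ) < (Nat.factorial (n+l) : ℝ) := fpos _
    have h2 : (0:ℝ) < (Nat.factorial l : ℝ) := fpos _
    have h3 : (0:ℝ) < (Nat.factorial (n-l) : ℝ) := fpos _
    have h4 : (0:ℝ) < (2*x)^l := by positivity
    rw [one_pow, one_mul]
    positivity
  · exact ⟨0, Finset.mem_range.2 (Nat.succ_pos n)⟩

/-- Turán inequality for the Bessel polynomials S -/
lemma turan_S (x : ℝ) (hx : 0 < x) : ∀ m : ℕ,
    sB m x * sB (m+2) x - sB (m+1) x ^ 2 ≥ 0 := by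
  have hx' : x ≠ 0 := hx.ne'
  intro m
  induction m using Nat.twoStepInduction with
  | zero =>
      rw [sB0, sB1 x hx', sB2 x hx']
      have key : (1:ℝ) * (1 + 3/x + 3/x^2) - (1 + 1/x)^2 = 1/x + 2/x^2 := by
        field_simp; ring
      rw [key]
      positivity
  | one =>
      rw [sB1 x hx', sB2 x hx', sB3 x hx']
      have key : (1 + 1/x) * (1 + 6/x + 15/x^2 + 15/x^3) - (1 + 3/x + 3/x^2)^2
          = 1/x + 6/x^2 + 12/x^3 + 6/x^4 := by field_simp; ring
      rw [key]
      positivity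
  | more n ih _ =>
      have key : sB (n+2) x * sB (n+2+2) x - sB (n+2+1) x ^ 2
          = (sB n x * sB (n+2) x - sB (n+1) x ^ 2) + (2*(2*n+5)/x^2) * sB (n+2) x ^ 2 := by
        rw [sB_rec (n+2) x hx']
        rw [(rfl : sB (n+2+1) x = sB (n+1+2) x), sB_rec (n+1) x hx']
        rw [(rfl : sB (n+1+1) x = sB (n+2) x), sB_rec n x hx']
        field_simp; push_cast; ring
      rw [key]
      have h4 : 0 ≤ (2*(2*n+5)/x^2) * sB (n+2) x ^ 2 := by positivity
      linarith [ih]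

/-! ### Power series for `iBes` -/

noncomputable def sigc (n k : ℕ) : ℝ :=
  2^n * (Nat.factorial (n+k) : ℝ) / ((Nat.factorial k : ℝ) * (Nat.factorial (2*n+2*k+1) : ℝ))

noncomputable def sigt (n : ℕ) (x : ℝ) (k : ℕ) : ℝ := sigc n k * x^(n+2*k)

noncomputable def sig (n : ℕ) (x : ℝ) : ℝ := ∑' k, sigt n x k

lemma sigc_pos (n k : ℕ) : 0 < sigc n k := by
  unfold sigc
  have h1 := fpos (n+k); have h2 := fpos k; have h3 := fpos (2*n+2*k+1)
  positivity

lemma sigt_nonneg (n : ℕ) {x : ℝ} (hx : 0 ≤ x) (k : ℕ) : 0 ≤ sigt n x k :=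
  mul_nonneg (sigc_pos n k).le (pow_nonneg hx _)

lemma sigc_le (n k : ℕ) : sigc n k ≤ 2^n / ((Nat.factorial n : ℝ) * (Nat.factorial k : ℝ)) := by
  have hnat : (Nat.factorial n) * (Nat.factorial k) * (Nat.factorial (n+k))
      ≤ Nat.factorial (2*n+2*k+1) := by
    calc (Nat.factorial n) * (Nat.factorial k) * (Nat.factorial (n+k))
        ≤ (Nat.factorial (n+k)) * (Nat.factorial (n+k)) := by
          have := Nat.le_of_dvd (Nat.factorial_pos (n+k)) (Nat.factorial_mul_factorial_dvd_factorial_add n k)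
          exact Nat.mul_le_mul_right _ this
      _ ≤ Nat.factorial ((n+k) + (n+k)) := by
          have := Nat.le_of_dvd (Nat.factorial_pos ((n+k)+(n+k)))
            (Nat.factorial_mul_factorial_dvd_factorial_add (n+k) (n+k))
          exact this
      _ ≤ Nat.factorial (2*n+2*k+1) := Nat.factorial_le (by omega)
  have hcast : (Nat.factorial n : ℝ) * (Nat.factorial k : ℝ) * (Nat.factorial (n+k) : ℝ)
      ≤ (Nat.factorial (2*n+2*k+1) : ℝ) := by exact_mod_cast hnat
  unfold sigc
  rw [div_le_div_iff₀ (by positivity) (by positivity)]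
  have h2n : (0:ℝ) ≤ 2^n := by positivity
  have h1 : (1:ℝ) ≤ (Nat.factorial k : ℝ) := by exact_mod_cast (Nat.factorial_pos k)
  have hb : (2:ℝ)^n * ((Nat.factorial n : ℝ) * (Nat.factorial k : ℝ) * (Nat.factorial (n+k) : ℝ))
      ≤ 2^n * (Nat.factorial (2*n+2*k+1) : ℝ) := mul_le_mul_of_nonneg_left hcast h2n
  have hc : (0:ℝ) ≤ 2^n * (Nat.factorial (2*n+2*k+1) : ℝ) :=
    mul_nonneg h2n (fpos _).le
  nlinarith [mul_nonneg hc (sub_nonneg.2 h1)]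

lemma sigt_le (n : ℕ) {x : ℝ} (hx : 0 ≤ x) (k : ℕ) :
    sigt n x k ≤ (2^n * x^n / (Nat.factorial n : ℝ)) * ((x^2)^k / (Nat.factorial k : ℝ)) := by
  unfold sigt
  have h1 : x^(n+2*k) = x^n * (x^2)^k := by rw [pow_add, pow_mul]
  rw [h1]
  have h2 := sigc_le n k
  have h3 : (0:ℝ) ≤ x^n * (x^2)^k := by positivity
  have h4 : 2^n / ((Nat.factorial n : ℝ) * (Nat.factorial k : ℝ)) * (x^n * (x^2)^k)
      = (2^n * x^n / (Nat.factorial n : ℝ)) * ((x^2)^k / (Nat.factorial k : ℝ)) := by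
    field_simp
  calc sigc n k * (x^n * (x^2)^k) ≤ 2^n / ((Nat.factorial n : ℝ) * (Nat.factorial k : ℝ)) * (x^n * (x^2)^k) :=
        mul_le_mul_of_nonneg_right h2 h3
    _ = _ := h4

lemma summable_sigt (n : ℕ) {x : ℝ} (hx : 0 ≤ x) : Summable (sigt n x) := by
  apply Summable.of_nonneg_of_le (sigt_nonneg n hx) (sigt_le n hx)
  exact (Real.summable_pow_div_factorial (x^2)).mul_left _

lemma hasSum_sig (n : ℕ) {x : ℝ} (hx : 0 ≤ x) : HasSum (sigt n x) (sig n x) :=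
  (summable_sigt n hx).hasSum

lemma sig_pos (n : ℕ) {x : ℝ} (hx : 0 < x) : 0 < sig n x := by
  have h0 : sigt n x 0 ≤ sig n x :=
    Summable.le_tsum (summable_sigt n hx.le) 0 (fun j _ => sigt_nonneg n hx.le j)
  have : 0 < sigt n x 0 := mul_pos (sigc_pos n 0) (by positivity)
  linarith

lemma sig_le (n : ℕ) {x : ℝ} (hx : 0 ≤ x) :
    sig n x ≤ (2^n * x^n / (Nat.factorial n : ℝ)) * Real.exp (x^2) := by
  have hexp : HasSum (fun k : ℕ => (x^2)^k / (Nat.factorial k : ℝ)) (Real.exp (x^2)) := by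
    rw [Real.exp_eq_exp_ℝ]
    exact NormedSpace.expSeries_div_hasSum_exp (x^2)
  have h2 : HasSum (fun k : ℕ => (2^n * x^n / (Nat.factorial n : ℝ)) * ((x^2)^k / (Nat.factorial k : ℝ)))
      ((2^n * x^n / (Nat.factorial n : ℝ)) * Real.exp (x^2)) := hexp.mul_left _
  have h3 := Summable.tsum_le_tsum (sigt_le n hx) (summable_sigt n hx) h2.summable
  unfold sig
  exact h3.trans_eq h2.tsum_eq

lemma sig0 (x : ℝ) (hx : 0 < x) : sig 0 x * x = Real.sinh x := by
  have h : HasSum (fun k => sigt 0 x k * x) (sig 0 x * x) := (hasSum_sig 0 hx.le).mul_right x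
  have heq : (fun k => sigt 0 x k * x) = fun k : ℕ => x^(2*k+1) / (Nat.factorial (2*k+1) : ℝ) := by
    funext k
    unfold sigt sigc
    have hk := (fpos k).ne'
    have h1 : (2:ℝ)^0 = 1 := pow_zero 2
    have h2 : (0:ℕ)+k = k := by omega
    have h3 : 2*0+2*k+1 = 2*k+1 := by omega
    have h4 : (0:ℕ)+2*k = 2*k := by omega
    rw [h1, h2, h3, h4, one_mul]
    rw [div_mul_eq_mul_div, div_mul_eq_mul_div, div_eq_div_iff (by positivity) (by exact_mod_cast (fpos (2*k+1)).ne')]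
    push_cast
    ring
  rw [heq] at h
  exact h.unique (Real.hasSum_sinh x)

lemma sig1 (x : ℝ) (hx : 0 < x) : sig 1 x * x^2 = x * Real.cosh x - Real.sinh x := by
  have h : HasSum (fun k => sigt 1 x k * x^2) (sig 1 x * x^2) := (hasSum_sig 1 hx.le).mul_right _
  -- target series
  have hc : HasSum (fun k : ℕ => x * (x^(2*k) / (Nat.factorial (2*k) : ℝ)))
      (x * Real.cosh x) := (Real.hasSum_cosh x).mul_left x
  have hs := Real.hasSum_sinh x
  have hdiff : HasSum (fun k : ℕ => x * (x^(2*k) / (Nat.factorial (2*k) : ℝ))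
      - x^(2*k+1) / (Nat.factorial (2*k+1) : ℝ)) (x * Real.cosh x - Real.sinh x) := hc.sub hs
  -- shift by one
  have h0 : (x * (x^(2*0) / (Nat.factorial (2*0) : ℝ))
      - x^(2*0+1) / (Nat.factorial (2*0+1) : ℝ)) = 0 := by
    norm_num [Nat.factorial]
  have hshift : HasSum (fun k : ℕ => x * (x^(2*(k+1)) / (Nat.factorial (2*(k+1)) : ℝ))
      - x^(2*(k+1)+1) / (Nat.factorial (2*(k+1)+1) : ℝ)) (x * Real.cosh x - Real.sinh x) := by
    apply (hasSum_nat_add_iff (f := fun k : ℕ => x * (x^(2*k) / (Nat.factorial (2*k) : ℝ))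
      - x^(2*k+1) / (Nat.factorial (2*k+1) : ℝ)) (g := x * Real.cosh x - Real.sinh x) 1).mpr
    simpa [h0] using hdiff
  have heq : (fun k => sigt 1 x k * x^2) = (fun k : ℕ => x * (x^(2*(k+1)) / (Nat.factorial (2*(k+1)) : ℝ))
      - x^(2*(k+1)+1) / (Nat.factorial (2*(k+1)+1) : ℝ)) := by
    funext k
    unfold sigt sigc
    have e1 : (1:ℕ)+k = k+1 := by omega
    have e2 : 2*1+2*k+1 = 2*(k+1)+1 := by omega
    have e3 : (1:ℕ)+2*k = 2*k+1 := by omega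
    rw [e1, e2, e3]
    have f1 : (Nat.factorial (k+1) : ℝ) = (k+1) * (Nat.factorial k : ℝ) := fcast k
    have f2 : (Nat.factorial (2*(k+1)+1) : ℝ) = (2*(k+1)+1) * ((2*(k+1)) * (Nat.factorial (2*k+1) : ℝ)) := by
      rw [show 2*(k+1)+1 = (2*k+2)+1 by ring, fcast, show 2*k+2 = (2*k+1)+1 by ring, fcast]
      push_cast; ring
    have f3 : (Nat.factorial (2*(k+1)) : ℝ) = (2*(k+1)) * (Nat.factorial (2*k+1) : ℝ) := by
      rw [show 2*(k+1) = (2*k+1)+1 by ring, fcast]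
      push_cast; ring
    rw [f1, f2, f3]
    have hk := (fpos k).ne'
    have h2k1 := (fpos (2*k+1)).ne'
    field_simp
    ring
  rw [heq] at h
  exact h.unique hshift

lemma sig_rec (n : ℕ) (x : ℝ) (hx : 0 < x) :
    x * sig (n+2) x = x * sig n x - (2*n+3) * sig (n+1) x := by
  have h2 : HasSum (fun k => x * sigt (n+2) x k) (x * sig (n+2) x) :=
    (hasSum_sig (n+2) hx.le).mul_left x
  set F : ℕ → ℝ := fun k => x * sigt n x k - (2*n+3) * sigt (n+1) x k with hF
  have hF0 : F 0 = 0 := by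
    simp only [hF, sigt, sigc]
    have e1 : n+0 = n := by omega
    have e2 : 2*n+2*0+1 = 2*n+1 := by omega
    have e3 : (n+1)+0 = n+1 := by omega
    have e4 : 2*(n+1)+2*0+1 = 2*n+3 := by omega
    have e5 : (n+1)+2*0 = n+1 := by omega
    have e6 : n+2*0 = n := by omega
    simp only [e1, e2, e3, e4, e5, e6, Nat.mul_zero, Nat.add_zero]
    have f1 : (Nat.factorial (2*n+3) : ℝ) = (2*n+3) * ((2*n+2) * (Nat.factorial (2*n+1) : ℝ)) := by
      rw [show 2*n+3 = (2*n+2)+1 by ring, fcast, show 2*n+2 = (2*n+1)+1 by ring, fcast]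
      push_cast; ring
    have f2 : (Nat.factorial (n+1) : ℝ) = (n+1) * (Nat.factorial n : ℝ) := fcast n
    rw [f1, f2]
    have h1 := (fpos n).ne'
    have h2 := (fpos (2*n+1)).ne'
    have h3 : (Nat.factorial 0 : ℝ) = 1 := by norm_num [Nat.factorial]
    rw [h3]
    field_simp
    ring
  have hFs : ∀ k : ℕ, F (k+1) = x * sigt (n+2) x k := by
    intro k
    simp only [hF, sigt, sigc]
    have e1 : n+(k+1) = n+k+1 := by omega
    have e2 : 2*n+2*(k+1)+1 = 2*n+2*k+3 := by omega
    have e3 : (n+1)+(k+1) = n+k+2 := by omega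
    have e4 : 2*(n+1)+2*(k+1)+1 = 2*n+2*k+5 := by omega
    have e5 : (n+2)+k = n+k+2 := by omega
    have e6 : 2*(n+2)+2*k+1 = 2*n+2*k+5 := by omega
    have e7 : n+2*(k+1) = n+2*k+2 := by omega
    have e8 : (n+1)+2*(k+1) = n+2*k+3 := by omega
    have e9 : (n+2)+2*k = n+2*k+2 := by omega
    simp only [e1, e2, e3, e4, e5, e6, e7, e8, e9]
    have f1 : (Nat.factorial (k+1) : ℝ) = (k+1) * (Nat.factorial k : ℝ) := fcast k
    have f2 : (Nat.factorial (n+k+2) : ℝ) = (n+k+2) * (Nat.factorial (n+k+1) : ℝ) := by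
      rw [show n+k+2 = (n+k+1)+1 by ring, fcast]; push_cast; ring
    have f3 : (Nat.factorial (2*n+2*k+5) : ℝ)
        = (2*n+2*k+5) * ((2*n+2*k+4) * (Nat.factorial (2*n+2*k+3) : ℝ)) := by
      rw [show 2*n+2*k+5 = (2*n+2*k+4)+1 by ring, fcast, show 2*n+2*k+4 = (2*n+2*k+3)+1 by ring, fcast]
      push_cast; ring
    rw [f1, f2, f3]
    have h1 := (fpos k).ne'
    have h2 := (fpos (n+k+1)).ne'
    have h3 := (fpos (2*n+2*k+3)).ne'
    field_simp
    ring
  have hshift : HasSum (fun k => F (k+1)) (x * sig (n+2) x) := by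
    have heq : (fun k : ℕ => F (k+1)) = (fun k => x * sigt (n+2) x k) := funext hFs
    rw [heq]; exact h2
  have hFsum : HasSum F (x * sig (n+2) x) := by
    have := (hasSum_nat_add_iff (f := F) 1).mp hshift
    simpa [hF0] using this
  have hFsum2 : HasSum F (x * sig n x - (2*n+3) * sig (n+1) x) :=
    ((hasSum_sig n hx.le).mul_left x).sub ((hasSum_sig (n+1) hx.le).mul_left _)
  exact hFsum.unique hFsum2

lemma iBes0 (x : ℝ) (hx : x ≠ 0) : iBes 0 x = Real.sinh x / x := by
  rw [iBes_eq, sB0, tB0, Real.sinh_eq]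
  field_simp
  ring

lemma iBes1 (x : ℝ) (hx : x ≠ 0) : iBes 1 x = (x * Real.cosh x - Real.sinh x) / x^2 := by
  rw [iBes_eq, sB1 x hx, tB1 x hx, Real.sinh_eq, Real.cosh_eq]
  have h1 : ((-1:ℝ))^(1+1) = 1 := by norm_num
  rw [h1]
  field_simp
  ring

lemma iBes_rec (n : ℕ) (x : ℝ) (hx : x ≠ 0) :
    x * iBes (n+2) x = x * iBes n x - (2*n+3) * iBes (n+1) x := by
  rw [iBes_eq, iBes_eq, iBes_eq, tB_rec n x hx, sB_rec n x hx]
  have h1 : ((-1:ℝ))^(n+2+1) = (-1)^(n+1) := by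
    rw [show n+2+1 = (n+1)+2 by ring, pow_add]; norm_num
  have h2 : ((-1:ℝ))^(n+1+1) = -(-1)^(n+1) := by
    rw [pow_succ]; ring
  rw [h1, h2]
  field_simp
  ring

lemma iBes_eq_sig (x : ℝ) (hx : 0 < x) : ∀ n, iBes n x = sig n x := by
  have hx' : x ≠ 0 := hx.ne'
  intro n
  induction n using Nat.twoStepInduction with
  | zero =>
      rw [iBes0 x hx']
      have h := sig0 x hx
      field_simp
      linarith [h]
  | one =>
      rw [iBes1 x hx']
      have h := sig1 x hx
      have hx2 : x^2 ≠ 0 := by positivity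
      field_simp
      linarith [h]
  | more n ih1 ih2 =>
      have h1 := iBes_rec n x hx'
      have h2 := sig_rec n x hx
      have : x * iBes (n+2) x = x * sig (n+2) x := by
        rw [h1, h2, ih1, ih2]
      exact mul_left_cancel₀ hx' this

lemma iBes_pos (n : ℕ) {x : ℝ} (hx : 0 < x) : 0 < iBes n x := by
  rw [iBes_eq_sig x hx]
  exact sig_pos n hx

lemma iBes_le (n : ℕ) {x : ℝ} (hx : 0 < x) :
    iBes n x ≤ (2^n * x^n / (Nat.factorial n : ℝ)) * Real.exp (x^2) := by
  rw [iBes_eq_sig x hx]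
  exact sig_le n hx.le

/-! ### Turán inequality for `iBes` -/

lemma iBes_rec' (n : ℕ) (x : ℝ) (hx : x ≠ 0) :
    iBes (n+2) x = (x * iBes n x - (2*n+3) * iBes (n+1) x) / x := by
  rw [eq_div_iff hx, mul_comm (iBes (n+2) x) x]
  exact iBes_rec n x hx

lemma turan_i_step (n : ℕ) (x : ℝ) (hx : 0 < x) :
    iBes (n+1) x^2 - iBes n x * iBes (n+2) x
    = (iBes (n+3) x^2 - iBes (n+2) x * iBes (n+4) x) + (2*(2*n+5)/x^2) * iBes (n+2) x^2 := by
  have hx' : x ≠ 0 := hx.ne'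
  have g2 := iBes_rec' n x hx'
  have g3 : iBes (n+3) x = (x * iBes (n+1) x - (2*n+5) * iBes (n+2) x) / x := by
    have h := iBes_rec' (n+1) x hx'
    rw [(rfl : iBes (n+1+2) x = iBes (n+3) x), (rfl : iBes (n+1+1) x = iBes (n+2) x)] at h
    rw [h]; push_cast; ring_nf
  have g4 : iBes (n+4) x = (x * iBes (n+2) x - (2*n+7) * iBes (n+3) x) / x := by
    have h := iBes_rec' (n+2) x hx'
    rw [(rfl : iBes (n+2+2) x = iBes (n+4) x), (rfl : iBes (n+2+1) x = iBes (n+3) x)] at h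
    rw [h]; push_cast; ring_nf
  rw [g4, g3, g2]
  field_simp
  ring

lemma turan_i_mono (x : ℝ) (hx : 0 < x) (n : ℕ) : ∀ k : ℕ,
    iBes (n+2*k+1) x^2 - iBes (n+2*k) x * iBes (n+2*k+2) x
    ≤ iBes (n+1) x^2 - iBes n x * iBes (n+2) x := by
  intro k
  induction k with
  | zero => simp
  | succ m ih =>
      have hstep := turan_i_step (n+2*m) x hx
      have e1 : n+2*m+3 = n+2*(m+1)+1 := by omega
      have e2 : n+2*m+2 = n+2*(m+1) := by omega
      have e3 : n+2*m+4 = n+2*(m+1)+2 := by omega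
      rw [e1, e3] at hstep
      have e4 : iBes (n+2*m+2) x = iBes (n+2*(m+1)) x := by rw [e2]
      rw [e4] at hstep ih
      have hpos : 0 ≤ (2*(2*(n+2*m : ℕ)+5)/x^2) * iBes (n+2*(m+1)) x^2 := by positivity
      linarith [hstep, ih]

lemma turan_i (n : ℕ) (x : ℝ) (hx : 0 < x) :
    0 ≤ iBes (n+1) x^2 - iBes n x * iBes (n+2) x := by
  set B : ℕ → ℝ := fun m => (2*x)^m / (Nat.factorial m : ℝ) * Real.exp (x^2) with hB
  have hBpos : ∀ m, 0 < B m := by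
    intro m; simp only [hB]
    have := fpos m
    positivity
  have hiB : ∀ m, iBes m x ≤ B m := by
    intro m
    have h := iBes_le m hx
    simp only [hB]
    calc iBes m x ≤ (2^m * x^m / (Nat.factorial m : ℝ)) * Real.exp (x^2) := h
      _ = (2*x)^m / (Nat.factorial m : ℝ) * Real.exp (x^2) := by rw [mul_pow]
  have hlow : ∀ m : ℕ, -(B m * B (m+2)) ≤ iBes (m+1) x^2 - iBes m x * iBes (m+2) x := by
    intro m
    have h1 : iBes m x * iBes (m+2) x ≤ B m * B (m+2) :=
      mul_le_mul (hiB m) (hiB (m+2)) (iBes_pos (m+2) hx).le (hBpos m).le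
    nlinarith [sq_nonneg (iBes (m+1) x)]
  have hg : Filter.Tendsto (fun m : ℕ => (2*x)^m / (Nat.factorial m : ℝ)) Filter.atTop (nhds 0) :=
    FloorSemiring.tendsto_pow_div_factorial_atTop (2*x)
  have hBt : Filter.Tendsto B Filter.atTop (nhds 0) := by
    have := hg.mul_const (Real.exp (x^2))
    simpa [hB] using this
  have hBB : Filter.Tendsto (fun m : ℕ => B m * B (m+2)) Filter.atTop (nhds 0) := by
    have h2 : Filter.Tendsto (fun m : ℕ => B (m+2)) Filter.atTop (nhds 0) :=
      hBt.comp (Filter.tendsto_add_atTop_nat 2)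
    simpa using hBt.mul h2
  have hcomp : Filter.Tendsto (fun k : ℕ => n + 2*k) Filter.atTop Filter.atTop := by
    apply Filter.tendsto_atTop_atTop_of_monotone
    · intro a b h; dsimp only; omega
    · intro b; exact ⟨b, by omega⟩
  have hfin : Filter.Tendsto (fun k : ℕ => -(B (n+2*k) * B (n+2*k+2))) Filter.atTop (nhds 0) := by
    have := (hBB.comp hcomp).neg
    simpa using this
  apply le_of_tendsto hfin
  filter_upwards with k
  calc -(B (n+2*k) * B (n+2*k+2)) ≤ iBes (n+2*k+1) x^2 - iBes (n+2*k) x * iBes (n+2*k+2) x :=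
        hlow (n+2*k)
    _ ≤ iBes (n+1) x^2 - iBes n x * iBes (n+2) x := turan_i_mono x hx n k

/-! ### the two quadratic estimates and the core inequality -/

lemma kBes_pos (n : ℕ) {x : ℝ} (hx : 0 < x) : 0 < kBes n x := by
  rw [kBes_eq]
  have h1 := Real.exp_pos (-x)
  have h2 := sB_pos n x hx
  positivity

lemma fk_ineq (m : ℕ) (x : ℝ) (hx : 0 < x) :
    (x * kBes (m+2) x)^2 - (2*(m:ℝ)+3) * (x * kBes (m+2) x) * kBes (m+1) x
      - x^2 * (kBes (m+1) x)^2 ≥ 0 := by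
  have hx' : x ≠ 0 := hx.ne'
  have hrec := sB_rec m x hx'
  have ht := turan_S x hx m
  have key : (x * kBes (m+2) x)^2 - (2*(m:ℝ)+3) * (x * kBes (m+2) x) * kBes (m+1) x
      - x^2 * (kBes (m+1) x)^2
      = Real.exp (-x)^2 * (sB m x * sB (m+2) x - sB (m+1) x^2) := by
    rw [kBes_eq, kBes_eq, hrec]
    field_simp
    ring
  rw [key]
  have := sq_nonneg (Real.exp (-x))
  nlinarith [ht]

lemma fi_ineq (m : ℕ) (x : ℝ) (hx : 0 < x) :
    (x * iBes (m+2) x)^2 + (2*(m:ℝ)+1) * (x * iBes (m+2) x) * iBes (m+1) x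
      - (2*(m:ℝ)+2+x^2) * (iBes (m+1) x)^2 < 0 := by
  have hx' : x ≠ 0 := hx.ne'
  set I := iBes (m+1) x with hIdef
  set I1 := iBes (m+2) x with hI1def
  set I3 := iBes (m+3) x with hI3def
  set I4 := iBes (m+4) x with hI4def
  have hE : x * I3 = x * I - (2*(m:ℝ)+5) * I1 := by
    have h := iBes_rec (m+1) x hx'
    rw [(rfl : iBes (m+1+2) x = iBes (m+3) x), (rfl : iBes (m+1+1) x = iBes (m+2) x)] at h
    rw [← hIdef, ← hI1def, ← hI3def] at h
    push_cast at h
    linarith [h]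
  have hr : x * I4 = x * I1 - (2*(m:ℝ)+7) * I3 := by
    have h := iBes_rec (m+2) x hx'
    rw [(rfl : iBes (m+2+2) x = iBes (m+4) x), (rfl : iBes (m+2+1) x = iBes (m+3) x)] at h
    rw [← hI1def, ← hI3def, ← hI4def] at h
    push_cast at h
    linarith [h]
  have ht := turan_i (m+2) x hx
  rw [(rfl : iBes (m+2+1) x = iBes (m+3) x), (rfl : iBes (m+2+2) x = iBes (m+4) x)] at ht
  rw [← hI1def, ← hI3def, ← hI4def] at ht
  -- t2 : (x*I3)^2 + (2m+7)*(x*I3)*I1 - (x*I1)^2 ≥ 0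
  have e4 : x^2 * (I1 * I4) = (x*I1)^2 - (2*(m:ℝ)+7) * (x*I3) * I1 := by
    linear_combination (x*I1) * hr
  have t2 : (x*I3)^2 + (2*(m:ℝ)+7) * (x*I3) * I1 - (x*I1)^2 ≥ 0 := by
    have h5 : (x*I3)^2 + (2*(m:ℝ)+7) * (x*I3) * I1 - (x*I1)^2
        = x^2 * (I3^2 - I1 * I4) := by linear_combination e4
    rw [h5]
    have hx2 : (0:ℝ) ≤ x^2 := sq_nonneg x
    exact mul_nonneg hx2 ht
  have key : (x*I1)^2 + (2*(m:ℝ)+1) * (x*I1) * I - (2*(m:ℝ)+2+x^2) * I^2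
      = -((x*I3)^2 + (2*(m:ℝ)+7) * (x*I3) * I1 - (x*I1)^2)
        - 2*x*I*I1 - 2*(2*(m:ℝ)+5)*I1^2 - (2*(m:ℝ)+2)*I^2 := by
    linear_combination (x*I3 + x*I + 2*I1) * hE
  rw [key]
  have hI : 0 < I := iBes_pos (m+1) hx
  have hI1 : 0 < I1 := iBes_pos (m+2) hx
  have h6 : 0 < 2*x*I*I1 := by positivity
  have h7 : (0:ℝ) ≤ 2*(2*(m:ℝ)+5)*I1^2 := by positivity
  have h8 : (0:ℝ) ≤ (2*(m:ℝ)+2)*I^2 := by positivity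
  linarith [t2]

lemma core_ineq (m : ℕ) (x : ℝ) (hx : 0 < x) :
    0 < iBes (m+1) x * (x * kBes (m+2) x) - (x * iBes (m+2) x) * kBes (m+1) x
      - (2*(m:ℝ)+2) * (iBes (m+1) x * kBes (m+1) x) := by
  set I := iBes (m+1) x with hIdef
  set X := x * iBes (m+2) x with hXdef
  set K := kBes (m+1) x with hKdef
  set Y := x * kBes (m+2) x with hYdef
  have hI : 0 < I := iBes_pos (m+1) hx
  have hK : 0 < K := kBes_pos (m+1) hx
  have hX : 0 < X := mul_pos hx (iBes_pos (m+2) hx)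
  have hY : 0 < Y := mul_pos hx (kBes_pos (m+2) hx)
  set N : ℝ := (m:ℝ) + 1 with hNdef
  have hN : (1:ℝ) ≤ N := by simp [hNdef]
  have hfk : Y^2 - (2*N+1)*Y*K - x^2*K^2 ≥ 0 := by
    have := fk_ineq m x hx
    rw [← hYdef, ← hKdef] at this
    have e : (2*(m:ℝ)+3) = 2*N+1 := by rw [hNdef]; ring
    rw [e] at this
    exact this
  have hfi : X^2 + (2*N-1)*X*I - (2*N+x^2)*I^2 < 0 := by
    have := fi_ineq m x hx
    rw [← hXdef, ← hIdef] at this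
    have e1 : (2*(m:ℝ)+1) = 2*N-1 := by rw [hNdef]; ring
    have e2 : (2*(m:ℝ)+2+x^2) = 2*N+x^2 := by rw [hNdef]; ring
    rw [e1, e2] at this
    exact this
  have hY1 : (2*N+1)*K < Y := by
    by_contra h'
    push_neg at h'
    have h2 : Y*Y ≤ Y*((2*N+1)*K) := mul_le_mul_of_nonneg_left h' hY.le
    nlinarith [mul_pos (mul_pos hx hx) (mul_pos hK hK)]
  by_contra hcon
  push_neg at hcon
  -- hcon : I * Y - X * K - (2N) * (I*K) ≤ 0, but goal uses (2m+2) = 2N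
  have hcon' : I * Y ≤ X*K + 2*N*(I*K) := by
    have e : (2*(m:ℝ)+2) = 2*N := by rw [hNdef]; ring
    rw [e] at hcon
    linarith [hcon]
  set Z : ℝ := X + 2*N*I with hZdef
  have hZpos : 0 < Z := by rw [hZdef]; positivity
  have hZ : Y*I ≤ Z*K := by rw [hZdef]; nlinarith [hcon']
  have hfiZ : Z^2 - (2*N+1)*Z*I - x^2*I^2 < 0 := by
    have e : Z^2 - (2*N+1)*Z*I - x^2*I^2 = X^2 + (2*N-1)*X*I - (2*N+x^2)*I^2 := by
      rw [hZdef]; ring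
    rw [e]; exact hfi
  have A1 : 0 ≤ (Y^2 - (2*N+1)*Y*K - x^2*K^2) * I^2 := mul_nonneg hfk (sq_nonneg I)
  have eA1 : (Y^2 - (2*N+1)*Y*K - x^2*K^2) * I^2
      = (Y*I)^2 - (2*N+1)*(I*K)*(Y*I) - x^2*I^2*K^2 := by ring
  rw [eA1] at A1
  have A2 : (Z^2 - (2*N+1)*Z*I - x^2*I^2) * K^2 < 0 :=
    mul_neg_of_neg_of_pos hfiZ (by positivity)
  have eA2 : (Z^2 - (2*N+1)*Z*I - x^2*I^2) * K^2
      = (Z*K)^2 - (2*N+1)*(I*K)*(Z*K) - x^2*I^2*K^2 := by ring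
  rw [eA2] at A2
  have A5 : (2*N+1)*(I*K) < Y*I := by
    have := mul_lt_mul_of_pos_right hY1 hI
    calc (2*N+1)*(I*K) = (2*N+1)*K*I := by ring
      _ < Y*I := this
  have hP : 0 ≤ (Z*K - Y*I) * (Z*K + Y*I - (2*N+1)*(I*K)) := by
    apply mul_nonneg
    · linarith [hZ]
    · have : 0 < Z*K := mul_pos hZpos hK
      linarith [A5]
  nlinarith [A1, A2, hP]

lemma wronskian (n : ℕ) (x : ℝ) (hx : 0 < x) :
    iBes n x * (x * kBes (n+1) x) + (x * iBes (n+1) x) * kBes n x = 1/x := by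
  have P := pairing x hx.ne' n
  have hEE : Real.exp (-x) * Real.exp x = 1 := by rw [← Real.exp_add]; simp
  have hsign : ((-1:ℝ))^(n+1+1) = -(-1)^(n+1) := by rw [pow_succ]; ring
  have key : iBes n x * (x * kBes (n+1) x) + (x * iBes (n+1) x) * kBes n x
      = (Real.exp (-x) * Real.exp x) * (tB n x * sB (n+1) x + tB (n+1) x * sB n x) / (2*x) := by
    rw [iBes_eq, iBes_eq, kBes_eq, kBes_eq, hsign]
    field_simp
    ring
  rw [key, hEE, P]
  field_simp

lemma quad_endgame (a b c lam : ℝ) (hlam1 : -1 ≤ lam) (hlam2 : lam ≤ 1)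
    (ha : a ≤ 0) (hf1 : 0 < a - b + c) (hfm1 : 0 < a + b + c) :
    0 < a*lam^2 - b*lam + c := by
  have hquad : a*lam^2 - b*lam + c
      = (1-lam)/2 * (a + b + c) + (1+lam)/2 * (a - b + c) + a*(lam^2 - 1) := by ring
  rw [hquad]
  have hc1 : 0 ≤ (1-lam)/2 := by linarith
  have hc2 : 0 ≤ (1+lam)/2 := by linarith
  have h4 : (0:ℝ) ≤ 1 - lam^2 := by nlinarith
  have h3 : 0 ≤ a*(lam^2-1) := by
    have e : a*(lam^2-1) = (-a)*(1-lam^2) := by ring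
    rw [e]; exact mul_nonneg (by linarith) h4
  by_cases hpos : 0 < (1+lam)/2
  · have t1 : 0 ≤ (1-lam)/2 * (a+b+c) := mul_nonneg hc1 hfm1.le
    have t2 : 0 < (1+lam)/2 * (a-b+c) := mul_pos hpos hf1
    linarith
  · push_neg at hpos
    have hl : lam = -1 := by linarith
    have hc1' : (1-lam)/2 = 1 := by rw [hl]; norm_num
    have t1 : 0 < (1-lam)/2 * (a+b+c) := by rw [hc1']; linarith
    have t2 : 0 ≤ (1+lam)/2 * (a-b+c) := mul_nonneg hc2 hf1.le
    linarith

/-- the purely algebraic endgame -/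
lemma final_alg (N x eps epss lam I X K Y : ℝ)
    (hx : 0 < x) (hI : 0 < I) (hK : 0 < K) (hX : 0 < X) (hY : 0 < Y)
    (hN : 1 ≤ N) (heps : 0 < eps) (hle : eps ≤ epss)
    (hlam1 : -1 ≤ lam) (hlam2 : lam ≤ 1)
    (hW : I*Y + X*K = 1/x)
    (hG : 0 < I*Y - X*K - 2*N*(I*K))
    (hYK : N*K < Y) :
    0 < (N*(eps-epss)*I - epss*X)^2 * (N*K - Y) * K * lam^2
      - (N*(eps-epss)*I - epss*X) * (N*(eps-epss)*K + epss*Y)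
          * (2*N*(I*K) + X*K - I*Y) * lam
      + (N*(eps-epss)*K + epss*Y)^2 * (N*I + X) * I := by
  have hepss : 0 < epss := lt_of_lt_of_le heps hle
  have hN0 : (0:ℝ) < N := lt_of_lt_of_le one_pos hN
  apply quad_endgame _ _ _ _ hlam1 hlam2
  · -- leading coefficient nonpositive
    have hD : N*K - Y < 0 := by linarith
    have h1 : (N*K - Y) * K < 0 := mul_neg_of_neg_of_pos hD hK
    have h2 : (N*(eps-epss)*I - epss*X)^2 * ((N*K - Y) * K) ≤ 0 :=
      mul_nonpos_of_nonneg_of_nonpos (sq_nonneg _) h1.le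
    linarith [h2, (by ring : (N*(eps-epss)*I - epss*X)^2 * ((N*K - Y) * K)
      = (N*(eps-epss)*I - epss*X)^2 * (N*K - Y) * K)]
  · -- value at λ = 1
    have e : (N*(eps-epss)*I - epss*X)^2 * (N*K - Y) * K
        - (N*(eps-epss)*I - epss*X) * (N*(eps-epss)*K + epss*Y) * (2*N*(I*K) + X*K - I*Y)
        + (N*(eps-epss)*K + epss*Y)^2 * (N*I + X) * I
        = (epss*(X*K+I*Y)) * (N*eps*(I*Y+X*K)) := by ring
    rw [e]
    positivity
  · -- value at λ = -1
    have e : (N*(eps-epss)*I - epss*X)^2 * (N*K - Y) * K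
        + (N*(eps-epss)*I - epss*X) * (N*(eps-epss)*K + epss*Y) * (2*N*(I*K) + X*K - I*Y)
        + (N*(eps-epss)*K + epss*Y)^2 * (N*I + X) * I
        = (epss*(I*Y - X*K - 2*N*(I*K)) + 2*N*eps*(I*K))
          * (N*(2*epss-eps)*(I*Y - X*K - 2*N*(I*K)) + 2*N^2*epss*(I*K) + 2*epss*(X*Y)) := by
      ring
    rw [e]
    have h2e : 0 < 2*epss - eps := by linarith
    have hu : 0 < epss*(I*Y - X*K - 2*N*(I*K)) + 2*N*eps*(I*K) := by positivity
    have hv : 0 < N*(2*epss-eps)*(I*Y - X*K - 2*N*(I*K)) + 2*N^2*epss*(I*K) + 2*epss*(X*Y) := by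
      positivity
    exact mul_pos hu hv

/-- The quadratic `f_n(λ)` from the spectral-radius proof. -/
noncomputable def fquad (n : ℕ) (x eps epss lam : ℝ) : ℝ :=
  let A : ℝ := (n : ℝ) * (eps - epss) * iBes n x - x * epss * iBes (n + 1) x
  let B : ℝ := (n : ℝ) * (eps - epss) * kBes n x + x * epss * kBes (n + 1) x
  let C : ℝ := (n : ℝ) * iBes n x + x * iBes (n + 1) x
  let D : ℝ := (n : ℝ) * kBes n x - x * kBes (n + 1) x
  let F : ℝ := 2 * (n : ℝ) / x + iBes (n + 1) x / iBes n x - kBes (n + 1) x / kBes n x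
  A ^ 2 * D * kBes n x * lam ^ 2 - A * B * x * iBes n x * kBes n x * F * lam
    + B ^ 2 * C * iBes n x

/-- For every integer `n ≥ 1`, every real `x > 0`, all reals `ε, ε_s` with
`0 < ε ≤ ε_s`, and every real `λ ∈ [−1, 1]`, the quadratic `f_n` satisfies
`f_n(λ) > 0`. -/
theorem fquad_pos (n : ℕ) (hn : 1 ≤ n) (x : ℝ) (hx : 0 < x) (eps epss : ℝ)
    (heps : 0 < eps) (hle : eps ≤ epss) (lam : ℝ)
    (hlam : -1 ≤ lam ∧ lam ≤ 1) :
    0 < fquad n x eps epss lam := by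
  obtain ⟨m, rfl⟩ : ∃ m, n = m + 1 := ⟨n - 1, by omega⟩
  obtain ⟨hlam1, hlam2⟩ := hlam
  have hI : 0 < iBes (m+1) x := iBes_pos (m+1) hx
  have hI2 : 0 < iBes (m+2) x := iBes_pos (m+2) hx
  have hK : 0 < kBes (m+1) x := kBes_pos (m+1) hx
  have hK2 : 0 < kBes (m+2) x := kBes_pos (m+2) hx
  set N : ℝ := (m:ℝ) + 1 with hNdef
  have hN : (1:ℝ) ≤ N := by simp [hNdef]
  -- Wronskian
  have hW : iBes (m+1) x * (x * kBes (m+2) x) + (x * iBes (m+2) x) * kBes (m+1) x = 1/x := by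
    have h := wronskian (m+1) x hx
    rwa [(rfl : iBes (m+1+1) x = iBes (m+2) x), (rfl : kBes (m+1+1) x = kBes (m+2) x)] at h
  -- core strict inequality
  have hG : 0 < iBes (m+1) x * (x * kBes (m+2) x) - (x * iBes (m+2) x) * kBes (m+1) x
      - 2*N*(iBes (m+1) x * kBes (m+1) x) := by
    have h := core_ineq m x hx
    have e : (2*(m:ℝ)+2) = 2*N := by rw [hNdef]; ring
    rw [e] at h
    linarith [h]
  -- Y > N K
  have hYK : N * kBes (m+1) x < x * kBes (m+2) x := by
    have hfk := fk_ineq m x hx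
    by_contra h'
    push_neg at h'
    have hy : 0 < x * kBes (m+2) x := mul_pos hx hK2
    have h2 : (x * kBes (m+2) x) * (x * kBes (m+2) x) ≤ (x * kBes (m+2) x) * (N * kBes (m+1) x) :=
      mul_le_mul_of_nonneg_left h' hy.le
    have hNm : N ≤ 2*(m:ℝ)+3 := by rw [hNdef]; push_cast; linarith [Nat.cast_nonneg (α := ℝ) m]
    nlinarith [mul_pos (mul_pos hx hx) (mul_pos hK hK), mul_pos hy hK]
  have key : fquad (m+1) x eps epss lam
      = (N*(eps-epss)*(iBes (m+1) x) - epss*(x * iBes (m+2) x))^2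
          * (N*(kBes (m+1) x) - (x * kBes (m+2) x)) * (kBes (m+1) x) * lam^2
        - (N*(eps-epss)*(iBes (m+1) x) - epss*(x * iBes (m+2) x))
          * (N*(eps-epss)*(kBes (m+1) x) + epss*(x * kBes (m+2) x))
          * (2*N*((iBes (m+1) x)*(kBes (m+1) x)) + (x * iBes (m+2) x)*(kBes (m+1) x)
              - (iBes (m+1) x)*(x * kBes (m+2) x)) * lam
        + (N*(eps-epss)*(kBes (m+1) x) + epss*(x * kBes (m+2) x))^2
          * (N*(iBes (m+1) x) + (x * iBes (m+2) x)) * (iBes (m+1) x) := by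
    simp only [fquad]
    rw [(rfl : iBes (m+1+1) x = iBes (m+2) x), (rfl : kBes (m+1+1) x = kBes (m+2) x)]
    rw [hNdef]
    push_cast
    field_simp
  rw [key]
  exact final_alg N x eps epss lam (iBes (m+1) x) (x * iBes (m+2) x) (kBes (m+1) x)
    (x * kBes (m+2) x) hx hI hK (mul_pos hx hI2) (mul_pos hx hK2) hN heps hle hlam1 hlam2
    hW hG hYK
end

section
/- For n = 0, every real x > 0, and all reals ε, ε_s with 0 < ε ≤ ε_s, the quadratic f_0 satisfies f_0(1) = 0 and f_0(λ) > 0 for every real λ with −1 ≤ λ < 1. -/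
open Real Finset

lemma sinh_lt_mul_cosh {x : ℝ} (hx : 0 < x) : Real.sinh x < x * Real.cosh x := by
  have hderiv : ∀ t : ℝ, HasDerivAt (fun t => t * Real.cosh t - Real.sinh t)
      (t * Real.sinh t) t := by
    intro t
    have h1 := (hasDerivAt_id t).mul (Real.hasDerivAt_cosh t)
    have h2 := Real.hasDerivAt_sinh t
    have := h1.sub h2
    exact this.congr_deriv (by simp only [id_eq, id, one_mul]; ring)
  have hmono : StrictMonoOn (fun t => t * Real.cosh t - Real.sinh t) (Set.Ici 0) := by
    apply strictMonoOn_of_deriv_pos (convex_Ici 0)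
    · exact (Continuous.sub (continuous_id.mul Real.continuous_cosh)
        Real.continuous_sinh).continuousOn
    · intro t ht
      rw [interior_Ici] at ht
      rw [(hderiv t).deriv]
      exact mul_pos ht (Real.sinh_pos_iff.mpr ht)
  have := hmono (Set.self_mem_Ici) (Set.mem_Ici.mpr hx.le) hx
  simpa using this

/-- For `n = 0`, every real `x > 0`, and all reals `ε, ε_s` with `0 < ε ≤ ε_s`,
the quadratic `f_0` satisfies `f_0(1) = 0` and `f_0(λ) > 0` for every real `λ`
with `−1 ≤ λ < 1`. -/
theorem fquad_zero (x : ℝ) (hx : 0 < x) (eps epss : ℝ)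
    (heps : 0 < eps) (hle : eps ≤ epss) :
    fquad 0 x eps epss 1 = 0 ∧
      ∀ lam : ℝ, -1 ≤ lam → lam < 1 → 0 < fquad 0 x eps epss lam := by
  have hx' : x ≠ 0 := ne_of_gt hx
  have hepss : 0 < epss := lt_of_lt_of_le heps hle
  have ha : (0:ℝ) < Real.exp x := Real.exp_pos x
  have hb : (0:ℝ) < Real.exp (-x) := Real.exp_pos _
  have hab : Real.exp x * Real.exp (-x) = 1 := by
    rw [← Real.exp_add]; simp
  have hba : Real.exp (-x) < Real.exp x := Real.exp_lt_exp.mpr (by linarith)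
  -- closed forms
  have hk0 : kBes 0 x = Real.exp (-x) / x := by simp [kBes]
  have hk1 : kBes 1 x = Real.exp (-x) * (x + 1) / x ^ 2 := by
    simp [kBes, Finset.sum_range_succ, Nat.factorial]
    field_simp
  have hi0 : iBes 0 x = (Real.exp x - Real.exp (-x)) / (2 * x) := by
    simp [iBes]
    field_simp
    ring
  have hi1 : iBes 1 x = (Real.exp x * (x - 1) + Real.exp (-x) * (x + 1)) / (2 * x ^ 2) := by
    simp [iBes, Finset.sum_range_succ, Nat.factorial]
    field_simp
    ring
  -- positivity facts
  have hk0p : 0 < kBes 0 x := by rw [hk0]; positivity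
  have hk1p : 0 < kBes 1 x := by rw [hk1]; positivity
  have hi0p : 0 < iBes 0 x := by rw [hi0]; exact div_pos (by linarith) (by positivity)
  have hi1p : 0 < iBes 1 x := by
    rw [hi1]
    have h := sinh_lt_mul_cosh hx
    rw [Real.sinh_eq, Real.cosh_eq] at h
    have hnum : 0 < Real.exp x * (x - 1) + Real.exp (-x) * (x + 1) := by nlinarith
    exact div_pos hnum (by positivity)
  have hkey : 0 < kBes 1 x * iBes 0 x - kBes 0 x * iBes 1 x := by
    have h2x : x + x + 1 < Real.exp x * Real.exp x := by
      rw [← Real.exp_add]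
      exact Real.add_one_lt_exp (by positivity)
    have hd : 0 < Real.exp x - (x + 1) * Real.exp (-x) := by
      nlinarith [h2x, hab, ha, hb]
    have heq : kBes 1 x * iBes 0 x - kBes 0 x * iBes 1 x
        = Real.exp (-x) * (Real.exp x - (x + 1) * Real.exp (-x)) / x ^ 3 := by
      rw [hk0, hk1, hi0, hi1]
      field_simp
      ring
    rw [heq]
    positivity
  have hi0' : iBes 0 x ≠ 0 := ne_of_gt hi0p
  have hk0' : kBes 0 x ≠ 0 := ne_of_gt hk0p
  have hfq : ∀ lam : ℝ, fquad 0 x eps epss lam =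
      x ^ 3 * epss ^ 2 * iBes 1 x * kBes 1 x *
        ((1 - lam) * (iBes 1 x * kBes 0 x * lam + kBes 1 x * iBes 0 x)) := by
    intro lam
    simp only [fquad, Nat.cast_zero, zero_mul, zero_add, zero_sub, sub_zero, mul_zero]
    field_simp
    ring
  constructor
  · rw [hfq 1]; ring
  · intro lam h1 h2
    rw [hfq lam]
    have hik : 0 < iBes 1 x * kBes 0 x := mul_pos hi1p hk0p
    have hpos : 0 < iBes 1 x * kBes 0 x * lam + kBes 1 x * iBes 0 x := by
      nlinarith [hik, hkey]
    have hfac : 0 < (1 - lam) * (iBes 1 x * kBes 0 x * lam + kBes 1 x * iBes 0 x) :=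
      mul_pos (by linarith) hpos
    have hcoef : 0 < x ^ 3 * epss ^ 2 * iBes 1 x * kBes 1 x := by positivity
    exact mul_pos hcoef hfac
end

section
/- For every integer n ≥ 0 and every real x > 0, the function k_n is differentiable at x with derivative k_n'(x) = (n/x)·k_n(x) − k_{n+1}(x). -/
open Real Finset

noncomputable def cC (n l : ℕ) : ℝ :=
  (Nat.factorial (n + l) : ℝ) /
    ((Nat.factorial l : ℝ) * (Nat.factorial (n - l) : ℝ) * 2 ^ l)

lemma cC_zero (n : ℕ) : cC n 0 = 1 := by
  simp [cC, Nat.factorial, div_self, Nat.cast_ne_zero, Nat.factorial_ne_zero]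

lemma cC_rec (n l : ℕ) (h : l + 1 ≤ n) :
    cC (n + 1) (l + 1) = cC n (l + 1) + (n + l + 1) * cC n l := by
  obtain ⟨k, rfl⟩ := Nat.exists_eq_add_of_le h
  simp only [cC]
  have h1 : l + 1 + k + 1 + (l + 1) = (l + l + k + 2) + 1 := by omega
  have h2 : l + 1 + k + (l + 1) = (l + l + k + 1) + 1 := by omega
  have h3 : l + 1 + k + l = l + l + k + 1 := by omega
  have h4 : l + 1 + k + 1 - (l + 1) = k + 1 := by omega
  have h5 : l + 1 + k - (l + 1) = k := by omega
  have h6 : l + 1 + k - l = k + 1 := by omega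
  rw [h1, h2, h3, h4, h5, h6]
  simp only [Nat.factorial_succ]
  push_cast
  have f1 : (Nat.factorial l : ℝ) ≠ 0 := Nat.cast_ne_zero.2 (Nat.factorial_ne_zero l)
  have f2 : (Nat.factorial k : ℝ) ≠ 0 := Nat.cast_ne_zero.2 (Nat.factorial_ne_zero k)
  have f3 : (Nat.factorial (l + l + k + 1) : ℝ) ≠ 0 := Nat.cast_ne_zero.2 (Nat.factorial_ne_zero _)
  have f4 : (2 : ℝ) ^ l ≠ 0 := by positivity
  field_simp
  ring

lemma cC_top (n : ℕ) : cC (n + 1) (n + 1) = (2 * n + 1) * cC n n := by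
  simp only [cC, Nat.sub_self]
  have h1 : n + 1 + (n + 1) = (n + n + 1) + 1 := by omega
  have h2 : n + n = n + n := rfl
  rw [h1]
  simp only [Nat.factorial_succ, Nat.factorial_zero]
  push_cast
  have f1 : (Nat.factorial n : ℝ) ≠ 0 := Nat.cast_ne_zero.2 (Nat.factorial_ne_zero n)
  have f2 : (Nat.factorial (n + n) : ℝ) ≠ 0 := Nat.cast_ne_zero.2 (Nat.factorial_ne_zero _)
  have f4 : (2 : ℝ) ^ n ≠ 0 := by positivity
  field_simp
  ring

lemma cC_sum (n : ℕ) (y : ℝ) :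
    ∑ l ∈ Finset.range (n + 2), cC (n + 1) l * y ^ l =
      ∑ l ∈ Finset.range (n + 1), cC n l * y ^ l +
      ∑ l ∈ Finset.range (n + 1), (n + l + 1 : ℝ) * cC n l * y ^ (l + 1) := by
  rw [Finset.sum_range_succ' (fun l => cC (n+1) l * y ^ l) (n+1),
      Finset.sum_range_succ' (fun l => cC n l * y ^ l) n,
      Finset.sum_range_succ (fun l => cC (n+1) (l+1) * y ^ (l+1)) n,
      Finset.sum_range_succ (fun l => (n + l + 1 : ℝ) * cC n l * y ^ (l+1)) n]
  have h1 : ∑ l ∈ Finset.range n, cC (n+1) (l+1) * y ^ (l+1) =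
      ∑ l ∈ Finset.range n, (cC n (l+1) * y ^ (l+1) + (n + l + 1 : ℝ) * cC n l * y ^ (l+1)) := by
    refine Finset.sum_congr rfl fun l hl => ?_
    rw [cC_rec n l (Finset.mem_range.1 hl)]
    push_cast
    ring
  rw [h1, Finset.sum_add_distrib, cC_top, cC_zero, cC_zero]
  ring



lemma kBes_eq_s14 (n : ℕ) {x : ℝ} (hx : x ≠ 0) :
    kBes n x = ∑ l ∈ Finset.range (n + 1), cC n l * (Real.exp (-x) / x ^ (l + 1)) := by
  rw [kBes, Finset.mul_sum]
  refine Finset.sum_congr rfl fun l _ => ?_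
  rw [cC, mul_pow]
  have f1 : (Nat.factorial l : ℝ) ≠ 0 := Nat.cast_ne_zero.2 (Nat.factorial_ne_zero l)
  have f2 : (Nat.factorial (n - l) : ℝ) ≠ 0 := Nat.cast_ne_zero.2 (Nat.factorial_ne_zero _)
  have f3 : (2 : ℝ) ^ l ≠ 0 := by positivity
  have f4 : x ^ l ≠ 0 := pow_ne_zero _ hx
  field_simp
  ring

lemma term_hasDerivAt (l : ℕ) {x : ℝ} (hx : x ≠ 0) :
    HasDerivAt (fun x => Real.exp (-x) / x ^ (l + 1))
      (-(Real.exp (-x) / x ^ (l + 1)) - (l + 1 : ℝ) * (Real.exp (-x) / x ^ (l + 2))) x := by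
  have h1 : HasDerivAt (fun x : ℝ => Real.exp (-x)) (-Real.exp (-x)) x := by
    exact ((Real.hasDerivAt_exp (-x)).comp x (hasDerivAt_neg x)).congr_deriv (by ring)
  have h2 : HasDerivAt (fun x : ℝ => x ^ (l + 1)) ((l + 1 : ℝ) * x ^ l) x := by
    simpa using hasDerivAt_pow (l + 1) x
  have h3 := h1.div h2 (pow_ne_zero _ hx)
  refine h3.congr_deriv ?_
  have f4 : x ^ l ≠ 0 := pow_ne_zero _ hx
  field_simp
  ring

/-- For every integer `n ≥ 0` and every real `x > 0`, `k_n` is differentiable at `x`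
with derivative `k_n'(x) = (n/x)·k_n(x) − k_{n+1}(x)`. -/
theorem kBes_hasDerivAt (n : ℕ) (x : ℝ) (hx : 0 < x) :
    HasDerivAt (kBes n) ((n : ℝ) / x * kBes n x - kBes (n + 1) x) x := by
  have hne : x ≠ 0 := ne_of_gt hx
  set E := Real.exp (-x) with hE
  -- derivative of the rewritten sum
  have hd : HasDerivAt (fun y => ∑ l ∈ Finset.range (n + 1), cC n l * (Real.exp (-y) / y ^ (l + 1)))
      (∑ l ∈ Finset.range (n + 1),
        cC n l * (-(E / x ^ (l + 1)) - (l + 1 : ℝ) * (E / x ^ (l + 2)))) x := by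
    refine HasDerivAt.fun_sum fun l _ => ?_
    exact (term_hasDerivAt l hne).const_mul (cC n l)
  have heq : kBes n =ᶠ[nhds x] fun y => ∑ l ∈ Finset.range (n + 1),
      cC n l * (Real.exp (-y) / y ^ (l + 1)) := by
    filter_upwards [eventually_ne_nhds hne] with y hy
    exact kBes_eq_s14 n hy
  refine (hd.congr_of_eventuallyEq heq).congr_deriv ?_
  -- value identity
  have e1 : ∀ (c : ℝ) (l : ℕ), c * x⁻¹ ^ l * (E * x⁻¹) = c * (E / x ^ (l + 1)) := by
    intro c l
    simp only [div_eq_mul_inv, ← inv_pow, pow_succ]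
    ring
  have e2 : ∀ (c : ℝ) (l : ℕ), c * x⁻¹ ^ (l + 1) * (E * x⁻¹) = c * (E / x ^ (l + 2)) := by
    intro c l
    simp only [div_eq_mul_inv, ← inv_pow, pow_succ]
    ring
  have hs : ∑ l ∈ Finset.range (n + 2), cC (n + 1) l * (E / x ^ (l + 1)) =
      ∑ l ∈ Finset.range (n + 1), cC n l * (E / x ^ (l + 1)) +
      ∑ l ∈ Finset.range (n + 1), (n + l + 1 : ℝ) * cC n l * (E / x ^ (l + 2)) := by
    have h := congrArg (· * (E * x⁻¹)) (cC_sum n x⁻¹)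
    simpa only [add_mul, Finset.sum_mul, e1, e2] using h
  rw [kBes_eq_s14 n hne, kBes_eq_s14 (n + 1) hne, hs, Finset.mul_sum, ← Finset.sum_add_distrib,
    ← Finset.sum_sub_distrib]
  refine Finset.sum_congr rfl fun l _ => ?_
  have : x ^ l ≠ 0 := pow_ne_zero _ hne
  field_simp
  ring
end
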